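/- arXiv:2602.16734 — 3 statements merged into one kernel-verified Lean document; each statement's English description precedes it below -/
import Mathlib

section
/- If preferences are single-peaked and the number of winners k satisfies k ≥ ⌈m/2⌉, then any Bloc-voting winning set (with strict vote totals, i.e., each winner has strictly more approvals than each non-winner) consists of adjacent candidates. -/
open Finset

/-- Each voter's preference is a strict total (linear) order on the candidates. -/
def StrictPrefs {m N : ℕ} (P : Fin N → Fin m → Fin m → Prop) : Prop :=
  ∀ v : Fin N, IsStrictTotalOrder (Fin m) (P v)

/-- Single-peakedness w.r.t. the left-right order on `Fin m`: for `i < j < k`,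
no voter ranks both `C_i` and `C_k` above `C_j`. -/
def SinglePeaked {m N : ℕ} (P : Fin N → Fin m → Fin m → Prop) : Prop :=
  ∀ (v : Fin N) (i j k : Fin m), i < j → j < k → ¬ (P v i j ∧ P v k j)

/-- Number of voters preferring `a` to `b`. -/
def prefCount {m N : ℕ} (P : Fin N → Fin m → Fin m → Prop)
    [∀ v a b, Decidable (P v a b)] (a b : Fin m) : ℕ :=
  (univ.filter fun v => P v a b).card

/-- `a` majority-defeats `b`: strictly more than `N/2` voters prefer `a` to `b`. -/
def Defeats {m N : ℕ} (P : Fin N → Fin m → Fin m → Prop)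
    [∀ v a b, Decidable (P v a b)] (a b : Fin m) : Prop :=
  2 * prefCount P a b > N

instance {m N : ℕ} (P : Fin N → Fin m → Fin m → Prop)
    [∀ v a b, Decidable (P v a b)] (a b : Fin m) : Decidable (Defeats P a b) :=
  inferInstanceAs (Decidable (2 * prefCount P a b > N))

/-- Voter `v` approves candidate `a` under Bloc voting with `k` winners:
`a` is among `v`'s top `k` candidates. -/
def Approves {m N : ℕ} (P : Fin N → Fin m → Fin m → Prop)
    [∀ v a b, Decidable (P v a b)] (k : ℕ) (v : Fin N) (a : Fin m) : Prop :=
  (univ.filter fun b => P v b a).card < k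

instance {m N : ℕ} (P : Fin N → Fin m → Fin m → Prop)
    [∀ v a b, Decidable (P v a b)] (k : ℕ) (v : Fin N) (a : Fin m) :
    Decidable (Approves P k v a) :=
  inferInstanceAs (Decidable ((univ.filter fun b => P v b a).card < k))

/-- Bloc score of candidate `a`: the number of voters who approve `a`. -/
def blocScore {m N : ℕ} (P : Fin N → Fin m → Fin m → Prop)
    [∀ v a b, Decidable (P v a b)] (k : ℕ) (a : Fin m) : ℕ :=
  (univ.filter fun v => Approves P k v a).card

/-- `W` is a winning set under Bloc voting with `k` winners (strict vote totals):
`W` has `k` members and each member has strictly more approvals than each non-member. -/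
def IsWinningSet {m N : ℕ} (P : Fin N → Fin m → Fin m → Prop)
    [∀ v a b, Decidable (P v a b)] (k : ℕ) (W : Finset (Fin m)) : Prop :=
  W.card = k ∧ ∀ w ∈ W, ∀ c ∉ W, blocScore P k w > blocScore P k c

section Aux

variable {m N : ℕ} (P : Fin N → Fin m → Fin m → Prop) [∀ v a b, Decidable (P v a b)]

/-- Rank of candidate `x` for voter `v`: number of candidates beating `x`. -/
def rankv (v : Fin N) (x : Fin m) : ℕ := (univ.filter fun b => P v b x).card

lemma rank_lt_of_pref (hP : StrictPrefs P) (v : Fin N) {x y : Fin m} (h : P v x y) :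
    rankv P v x < rankv P v y := by
  have hto := hP v
  have hsub : insert x (univ.filter fun b => P v b x) ⊆ univ.filter fun b => P v b y := by
    intro b hb
    simp only [mem_insert, mem_filter, mem_univ, true_and] at hb ⊢
    rcases hb with rfl | hb
    · exact h
    · exact hto.trans _ _ _ hb h
  have hx : x ∉ univ.filter fun b => P v b x := by
    simp [hto.irrefl x]
  have h1 : (univ.filter fun b => P v b x).card + 1
      ≤ (univ.filter fun b => P v b y).card := by
    have := card_le_card hsub
    rwa [card_insert_of_notMem hx] at this
  simpa [rankv] using h1

lemma pref_of_rank_lt (hP : StrictPrefs P) (v : Fin N) {x y : Fin m}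
    (h : rankv P v x < rankv P v y) : P v x y := by
  rcases (by have h := (hP v).trichotomous x y; tauto : P v x y ∨ x = y ∨ P v y x) with h1 | rfl | h1
  · exact h1
  · omega
  · exact absurd (rank_lt_of_pref P hP v h1) (by omega)

lemma rank_lt_m (hP : StrictPrefs P) (v : Fin N) (x : Fin m) : rankv P v x < m := by
  have hsub : (univ.filter fun b => P v b x) ⊆ univ.erase x := by
    intro b hb
    simp only [mem_filter, mem_univ, true_and] at hb
    refine mem_erase.2 ⟨?_, mem_univ _⟩
    exact fun h => (hP v).irrefl x (h ▸ hb)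
  have := card_le_card hsub
  have hx : (univ.erase x).card = m - 1 := by
    rw [card_erase_of_mem (mem_univ x)]; simp
  have hm : 0 < m := x.pos
  simp only [rankv]; omega

lemma card_approved_ge (hP : StrictPrefs P) (v : Fin N) (k : ℕ) (hm0 : 0 < m) (hkm : k ≤ m) :
    k ≤ (univ.filter fun x => Approves P k v x).card := by
  -- rank is injective, hence (as a map Fin m → Fin m) surjective
  have hinj : Function.Injective (fun x : Fin m => (⟨rankv P v x, rank_lt_m P hP v x⟩ : Fin m)) := by
    intro x y hxy
    by_contra hne
    rcases (by have h := (hP v).trichotomous x y; tauto : P v x y ∨ x = y ∨ P v y x) with h1 | h1 | h1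
    · have := rank_lt_of_pref P hP v h1
      simp only [Fin.mk.injEq] at hxy; omega
    · exact hne h1
    · have := rank_lt_of_pref P hP v h1
      simp only [Fin.mk.injEq] at hxy; omega
  have hsurj : Function.Surjective
      (fun x : Fin m => (⟨rankv P v x, rank_lt_m P hP v x⟩ : Fin m)) :=
    Finite.surjective_of_injective hinj
  -- for each j < k there is a candidate of rank j, which is approved
  have hle : k ≤ (univ.filter fun j : Fin m => (j : ℕ) < k).card := by
    have := Finset.card_le_card_of_injOn
      (f := fun i : ℕ => (⟨min i (m - 1), by omega⟩ : Fin m))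
      (s := Finset.range k) (t := univ.filter fun j : Fin m => (j : ℕ) < k)
      (by intro i hi
          simp only [mem_coe, mem_range] at hi
          simp only [coe_filter, Set.mem_setOf_eq, mem_coe, mem_filter, mem_univ, true_and]
          simpa using by omega)
      (by intro i hi j hj hij
          simp only [coe_range, Set.mem_Iio] at hi hj
          simp only [Fin.mk.injEq] at hij
          omega)
    simpa using this
  refine le_trans hle (Finset.card_le_card_of_surjOn
      (fun x : Fin m => (⟨rankv P v x, rank_lt_m P hP v x⟩ : Fin m)) ?_)
  intro j hj
  simp only [coe_filter, Set.mem_setOf_eq, mem_univ, true_and] at hj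
  obtain ⟨x, hx⟩ := hsurj j
  refine ⟨x, ?_, hx⟩
  rw [mem_coe, mem_filter]; refine ⟨mem_univ _, ?_⟩; simp only [Approves]
  have : rankv P v x = (j : ℕ) := by rw [← hx]
  simp only [rankv] at this
  omega

end Aux

/-- If `k ≥ ⌈m/2⌉`, any Bloc-voting winning set is an interval of
consecutive candidates. -/
theorem bloc_winning_set_adjacent_of_large_k {m N : ℕ}
    (P : Fin N → Fin m → Fin m → Prop) [∀ v a b, Decidable (P v a b)]
    (hP : StrictPrefs P) (hSP : SinglePeaked P)
    (k : ℕ) (hk : (m + 1) / 2 ≤ k)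
    (W : Finset (Fin m)) (hW : IsWinningSet P k W) :
    ∀ a ∈ W, ∀ b ∈ W, ∀ c : Fin m, a ≤ c → c ≤ b → c ∈ W := by
  intro a ha b hb c hac hcb
  by_contra hc
  have hm2k : m ≤ 2 * k := by omega
  by_cases hm : m ≤ k
  · -- every voter approves every candidate, so all scores are N, contradiction
    have hall : ∀ (v : Fin N) (x : Fin m), Approves P k v x := by
      intro v x
      have := rank_lt_m P hP v x
      simp only [rankv] at this
      simp only [Approves]; omega
    have hcN : blocScore P k c = N := by
      simp only [blocScore]
      rw [filter_true_of_mem (fun v _ => hall v c)]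
      simp
    have haN : blocScore P k a ≤ N := by
      have := card_filter_le (univ : Finset (Fin N)) (fun v => Approves P k v a)
      simpa [blocScore] using this
    have := hW.2 a ha c hc
    omega
  · push_neg at hm
    have hac' : a < c := lt_of_le_of_ne hac (by rintro rfl; exact hc ha)
    have hcb' : c < b := lt_of_le_of_ne hcb (by rintro rfl; exact hc hb)
    -- a voter approving a winner but not c exists
    have hexists : ∀ w ∈ W, ∃ v, Approves P k v w ∧ ¬ Approves P k v c := by
      intro w hw
      by_contra h
      push_neg at h
      have hsub : (univ.filter fun v => Approves P k v w)
          ⊆ (univ.filter fun v => Approves P k v c) := by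
        intro v hv
        simp only [mem_filter, mem_univ, true_and] at hv ⊢
        exact h v hv
      have := card_le_card hsub
      have hgt := hW.2 w hw c hc
      simp only [blocScore] at hgt
      omega
    obtain ⟨v, hva, hvc⟩ := hexists a ha
    obtain ⟨u, hub, huc⟩ := hexists b hb
    -- voter v's approved set lies strictly left of c
    have hvleft : ∀ x : Fin m, Approves P k v x → (x : ℕ) < (c : ℕ) := by
      intro x hx
      by_contra hge
      push_neg at hge
      have hne : c ≠ x := by rintro rfl; exact hvc hx
      have hcx : c < x := lt_of_le_of_ne (by exact_mod_cast hge) hne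
      simp only [Approves] at hva hvc hx
      push_neg at hvc
      have h1 : P v a c := pref_of_rank_lt P hP v (by simp only [rankv]; omega)
      have h2 : P v x c := pref_of_rank_lt P hP v (by simp only [rankv]; omega)
      exact hSP v a c x hac' hcx ⟨h1, h2⟩
    -- voter u's approved set lies strictly right of c
    have huright : ∀ x : Fin m, Approves P k u x → (c : ℕ) < (x : ℕ) := by
      intro x hx
      by_contra hge
      push_neg at hge
      have hne : x ≠ c := by rintro rfl; exact huc hx
      have hxc : x < c := lt_of_le_of_ne (by exact_mod_cast hge) hne
      simp only [Approves] at hub huc hx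
      push_neg at huc
      have h1 : P u x c := pref_of_rank_lt P hP u (by simp only [rankv]; omega)
      have h2 : P u b c := pref_of_rank_lt P hP u (by simp only [rankv]; omega)
      exact hSP u x c b hxc hcb' ⟨h1, h2⟩
    -- hence k ≤ c and k ≤ m - 1 - c, contradicting m ≤ 2k
    have hkc : k ≤ (c : ℕ) := by
      have h1 := card_approved_ge P hP v k (by omega) (le_of_lt hm)
      have h2 : (univ.filter fun x => Approves P k v x).card ≤ (c : ℕ) := by
        have := Finset.card_le_card_of_injOn (f := Fin.val)
          (s := univ.filter fun x => Approves P k v x)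
          (t := Finset.range (c : ℕ))
          (by intro x hx
              simp only [coe_filter, Set.mem_setOf_eq, mem_coe, mem_filter, mem_univ, true_and] at hx
              simpa using hvleft x hx)
          (fun x _ y _ h => Fin.val_injective h)
        simpa using this
      omega
    have hkc' : k ≤ m - 1 - (c : ℕ) := by
      have h1 := card_approved_ge P hP u k (by omega) (le_of_lt hm)
      have h2 : (univ.filter fun x => Approves P k u x).card ≤ m - ((c : ℕ) + 1) := by
        have := Finset.card_le_card_of_injOn (f := Fin.val)
          (s := univ.filter fun x => Approves P k u x)
          (t := Finset.Ico ((c : ℕ) + 1) m)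
          (by intro x hx
              simp only [coe_filter, Set.mem_setOf_eq, mem_coe, mem_filter, mem_univ, true_and] at hx
              simp only [mem_coe, mem_Ico]
              exact ⟨huright x hx, x.isLt⟩)
          (fun x _ y _ h => Fin.val_injective h)
        simpa using this
      have hcm := c.isLt
      omega
    have hcm := c.isLt
    omega
end

section
/- With five candidates A < B < C < D < E, single-peaked preferences, an odd number of voters, and Bloc voting with k = 2: if the winning set is {B,C} (each with strictly more approvals than A, D, E), then {B,C} is Gehrlein-stable, i.e., both B and C majority-defeat each of A, D, and E. -/
open Finset

section Aux

variable {N : ℕ}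

/-- If at most one candidate beats `x` for voter `v`, then `v` approves `x` (k = 2). -/
lemma approves_of_unique_beater (P : Fin N → Fin 5 → Fin 5 → Prop)
    [∀ v a b, Decidable (P v a b)] (v : Fin N) (x : Fin 5)
    (h : ∀ b c : Fin 5, P v b x → P v c x → b = c) : Approves P 2 v x := by
  unfold Approves
  have h1 : (univ.filter fun b => P v b x).card ≤ 1 := by
    rw [Finset.card_le_one]
    intro a ha b hb
    simp only [mem_filter] at ha hb
    exact h a b ha.2 hb.2
  omega

/-- A voter cannot approve (k = 2) two candidates with a third strictly between them. -/
lemma not_coapprove (P : Fin N → Fin 5 → Fin 5 → Prop)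
    [∀ v a b, Decidable (P v a b)] (hP : StrictPrefs P) (hSP : SinglePeaked P)
    (v : Fin N) (y j z : Fin 5) (hyj : y < j) (hjz : j < z) :
    ¬ (Approves P 2 v y ∧ Approves P 2 v z) := by
  rintro ⟨hy, hz⟩
  haveI := hP v
  have tr : ∀ a b c : Fin 5, P v a b → P v b c → P v a c := fun a b c => trans_of (P v)
  have irr : ∀ a : Fin 5, ¬ P v a a := fun a => irrefl_of (P v) a
  have tot : ∀ a b : Fin 5, a ≠ b → P v a b ∨ P v b a := by
    intro a b hab
    rcases trichotomous_of (P v) a b with h | h | h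
    · exact Or.inl h
    · exact absurd h hab
    · exact Or.inr h
  have two_beaters : ∀ x b c : Fin 5, Approves P 2 v x → P v b x → P v c x → b = c := by
    intro x b c hx hb hc
    by_contra hne
    have h2 : 1 < (univ.filter fun d => P v d x).card := by
      rw [Finset.one_lt_card]
      exact ⟨b, by simp [hb], c, by simp [hc], hne⟩
    unfold Approves at hx; omega
  by_cases hyjP : P v y j
  · by_cases hzjP : P v z j
    · exact hSP v y j z hyj hjz ⟨hyjP, hzjP⟩
    · have hjzP : P v j z := (tot j z (ne_of_lt hjz)).resolve_right hzjP
      have hyz : P v y z := tr _ _ _ hyjP hjzP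
      exact (ne_of_lt hyj) (two_beaters z y j hz hyz hjzP)
  · have hjy : P v j y := (tot y j (ne_of_lt hyj)).resolve_left hyjP
    by_cases hzjP : P v z j
    · have hzy : P v z y := tr _ _ _ hzjP hjy
      exact (ne_of_lt hjz) (two_beaters y j z hy hjy hzy)
    · have hjzP : P v j z := (tot j z (ne_of_lt hjz)).resolve_right hzjP
      rcases tot y z (ne_of_lt (hyj.trans hjz)) with h | h
      · exact (ne_of_lt hyj) (two_beaters z y j hz h hjzP)
      · exact (ne_of_lt hjz) (two_beaters y j z hy hjy h)

/-- Opposite preference counts add up to `N`. -/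
lemma prefCount_add (P : Fin N → Fin 5 → Fin 5 → Prop)
    [∀ v a b, Decidable (P v a b)] (hP : StrictPrefs P) (w x : Fin 5) (hwx : w ≠ x) :
    prefCount P w x + prefCount P x w = N := by
  have key : (univ.filter fun v => P v x w) = (univ.filter fun v => ¬ P v w x) := by
    ext v
    haveI := hP v
    simp only [mem_filter, mem_univ, true_and]
    constructor
    · intro h hw
      exact irrefl_of (P v) w (trans_of (P v) hw h)
    · intro h
      rcases trichotomous_of (P v) w x with h' | h' | h'
      · exact absurd h' h
      · exact absurd h' hwx
      · exact h'
  unfold prefCount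
  rw [key, Finset.card_filter_add_card_filter_not]
  simp

/-- Main counting lemma: if every voter preferring `x` to `w` approves `y`,
and `y` scores below a candidate `z` whose approvals are disjoint from `y`'s,
then `w` defeats `x`. -/
lemma defeats_of (P : Fin N → Fin 5 → Fin 5 → Prop)
    [∀ v a b, Decidable (P v a b)] (hP : StrictPrefs P)
    (w x y z : Fin 5) (hwx : w ≠ x)
    (himp : ∀ v : Fin N, P v x w → Approves P 2 v y)
    (hlt : blocScore P 2 y < blocScore P 2 z)
    (hdis : ∀ v : Fin N, ¬ (Approves P 2 v y ∧ Approves P 2 v z)) :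
    Defeats P w x := by
  have h1 : prefCount P x w ≤ blocScore P 2 y := by
    apply Finset.card_le_card
    intro v hv
    simp only [mem_filter, mem_univ, true_and] at hv ⊢
    exact himp v hv
  have h2 : blocScore P 2 y + blocScore P 2 z ≤ N := by
    have hd : Disjoint (univ.filter fun v => Approves P 2 v y)
        (univ.filter fun v => Approves P 2 v z) := by
      rw [Finset.disjoint_left]
      intro a ha hb
      simp only [mem_filter, mem_univ, true_and] at ha hb
      exact hdis a ⟨ha, hb⟩
    calc blocScore P 2 y + blocScore P 2 z
        = ((univ.filter fun v => Approves P 2 v y) ∪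
           (univ.filter fun v => Approves P 2 v z)).card := (Finset.card_union_of_disjoint hd).symm
      _ ≤ (univ : Finset (Fin N)).card := Finset.card_le_card (Finset.subset_univ _)
      _ = N := by simp
  have h3 := prefCount_add P hP w x hwx
  unfold Defeats
  omega

end Aux

section Voter

variable {Q : Fin 5 → Fin 5 → Prop}

/-- Abstract single-voter facts, packaged. -/
structure VoterFacts (Q : Fin 5 → Fin 5 → Prop) : Prop where
  tr : ∀ a b c : Fin 5, Q a b → Q b c → Q a c
  irr : ∀ a : Fin 5, ¬ Q a a
  tot : ∀ a b : Fin 5, a ≠ b → Q a b ∨ Q b a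
  sp : ∀ i j k : Fin 5, i < j → j < k → ¬ (Q i j ∧ Q k j)

namespace VoterFacts

lemma asym (h : VoterFacts Q) {a b : Fin 5} (hab : Q a b) : ¬ Q b a :=
  fun hba => h.irr a (h.tr a b a hab hba)

/-- From SP(i,j,k) and `Q k j`, get `Q j i`. -/
lemma left (h : VoterFacts Q) {i j k : Fin 5} (hij : i < j) (hjk : j < k)
    (hkj : Q k j) : Q j i :=
  (h.tot i j (ne_of_lt hij)).resolve_left (fun hij' => h.sp i j k hij hjk ⟨hij', hkj⟩)

/-- From SP(i,j,k) and `Q i j`, get `Q j k`. -/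
lemma right (h : VoterFacts Q) {i j k : Fin 5} (hij : i < j) (hjk : j < k)
    (hij' : Q i j) : Q j k :=
  (h.tot j k (ne_of_lt hjk)).resolve_right (fun hkj => h.sp i j k hij hjk ⟨hij', hkj⟩)

/-- Case (x,w) = (0,1): if `Q 0 1`, nobody beats `0` except possibly... in fact nobody. -/
lemma case01 (h : VoterFacts Q) (h01 : Q 0 1) :
    ∀ b c : Fin 5, Q b 0 → Q c 0 → b = c := by
  have key : ∀ b : Fin 5, Q b 0 → False := by
    intro b hb
    fin_cases b
    · exact h.irr 0 hb
    · exact h.asym h01 hb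
    · exact h.asym h01 (h.tr 1 2 0 (h.right (by decide) (by decide) h01) hb)
    · -- SP(0,1,3): Q 0 1 → Q 1 3
      exact h.asym h01 (h.tr 1 3 0 (h.right (i := 0) (k := 3) (by decide) (by decide) h01) hb)
    · exact h.asym h01 (h.tr 1 4 0 (h.right (i := 0) (k := 4) (by decide) (by decide) h01) hb)
  intro b c hb _; exact absurd hb (fun hb' => key b hb')

/-- Case (x,w) = (0,2): if `Q 0 2`, only `1` can beat `0`. -/
lemma case02 (h : VoterFacts Q) (h02 : Q 0 2) :
    ∀ b c : Fin 5, Q b 0 → Q c 0 → b = c := by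
  have key : ∀ b : Fin 5, Q b 0 → b = 1 := by
    intro b hb
    fin_cases b
    · exact absurd hb (h.irr 0)
    · rfl
    · exact absurd hb (h.asym h02)
    · -- SP(0,2,3) with Q 0 2 gives Q 2 3; trans with Q 3 0 gives Q 2 0
      exact absurd (h.tr 2 3 0 (h.right (i := 0) (j := 2) (k := 3) (by decide) (by decide) h02) hb)
        (h.asym h02)
    · exact absurd (h.tr 2 4 0 (h.right (i := 0) (j := 2) (k := 4) (by decide) (by decide) h02) hb)
        (h.asym h02)
  intro b c hb hc
  rw [key b hb, key c hc]

/-- Case (x,w) = (3,2): if `Q 3 2`, only `4` can beat `3`. -/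
lemma case32 (h : VoterFacts Q) (h32 : Q 3 2) :
    ∀ b c : Fin 5, Q b 3 → Q c 3 → b = c := by
  have key : ∀ b : Fin 5, Q b 3 → b = 4 := by
    intro b hb
    fin_cases b
    · -- SP(0,2,3) with Q 3 2 gives Q 2 0; trans Q 3 2, Q 2 0 gives Q 3 0
      exact absurd (h.tr 3 2 0 h32 (h.left (i := 0) (j := 2) (k := 3) (by decide) (by decide) h32))
        (fun h30 => h.asym h30 hb)
    · exact absurd (h.tr 3 2 1 h32 (h.left (i := 1) (j := 2) (k := 3) (by decide) (by decide) h32))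
        (fun h31 => h.asym h31 hb)
    · exact absurd hb (h.asym h32)
    · exact absurd hb (h.irr 3)
    · rfl
  intro b c hb hc
  rw [key b hb, key c hc]

/-- Case (x,w) = (4,2): if `Q 4 2`, only `3` can beat `4`. -/
lemma case42 (h : VoterFacts Q) (h42 : Q 4 2) :
    ∀ b c : Fin 5, Q b 4 → Q c 4 → b = c := by
  have key : ∀ b : Fin 5, Q b 4 → b = 3 := by
    intro b hb
    fin_cases b
    · exact absurd (h.tr 4 2 0 h42 (h.left (i := 0) (j := 2) (k := 4) (by decide) (by decide) h42))
        (fun h40 => h.asym h40 hb)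
    · exact absurd (h.tr 4 2 1 h42 (h.left (i := 1) (j := 2) (k := 4) (by decide) (by decide) h42))
        (fun h41 => h.asym h41 hb)
    · exact absurd hb (h.asym h42)
    · rfl
    · exact absurd hb (h.irr 4)
  intro b c hb hc
  rw [key b hb, key c hc]

/-- Case (x,w) = (3,1): if `Q 3 1`, candidate `3` has at most one beater. -/
lemma case31 (h : VoterFacts Q) (h31 : Q 3 1) :
    ∀ b c : Fin 5, Q b 3 → Q c 3 → b = c := by
  have key : ∀ b : Fin 5, Q b 3 → b = 2 ∨ b = 4 := by
    intro b hb
    fin_cases b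
    · -- Q 0 3: SP(0,1,3) with Q 3 1 gives Q 1 0; Q 3 1, Q 1 0 gives Q 3 0, contra
      exact absurd (h.tr 3 1 0 h31 (h.left (i := 0) (j := 1) (k := 3) (by decide) (by decide) h31))
        (fun h30 => h.asym h30 hb)
    · exact absurd hb (h.asym h31)
    · exact Or.inl rfl
    · exact absurd hb (h.irr 3)
    · exact Or.inr rfl
  intro b c hb hc
  rcases key b hb with rfl | rfl <;> rcases key c hc with rfl | rfl
  · rfl
  · exact absurd ⟨hb, hc⟩ (h.sp 2 3 4 (by decide) (by decide))
  · exact absurd ⟨hc, hb⟩ (h.sp 2 3 4 (by decide) (by decide))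
  · rfl

/-- Case (x,w) = (4,1): if `Q 4 1`, candidate `3` has at most one beater. -/
lemma case41 (h : VoterFacts Q) (h41 : Q 4 1) :
    ∀ b c : Fin 5, Q b 3 → Q c 3 → b = c := by
  have key : ∀ b : Fin 5, Q b 3 → b = 2 ∨ b = 4 := by
    intro b hb
    fin_cases b
    · -- Q 0 3: SP(0,1,4) with Q 4 1 gives Q 1 0; so Q 1 3, so Q 4 3; SP(0,3,4) contra
      have h10 : Q 1 0 := h.left (i := 0) (j := 1) (k := 4) (by decide) (by decide) h41
      have h13 : Q 1 3 := h.tr 1 0 3 h10 hb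
      have h43 : Q 4 3 := h.tr 4 1 3 h41 h13
      exact absurd ⟨hb, h43⟩ (h.sp 0 3 4 (by decide) (by decide))
    · -- Q 1 3: Q 4 1, Q 1 3 gives Q 4 3; SP(1,3,4) contra
      have h43 : Q 4 3 := h.tr 4 1 3 h41 hb
      exact absurd ⟨hb, h43⟩ (h.sp 1 3 4 (by decide) (by decide))
    · exact Or.inl rfl
    · exact absurd hb (h.irr 3)
    · exact Or.inr rfl
  intro b c hb hc
  rcases key b hb with rfl | rfl <;> rcases key c hc with rfl | rfl
  · rfl
  · exact absurd ⟨hb, hc⟩ (h.sp 2 3 4 (by decide) (by decide))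
  · exact absurd ⟨hc, hb⟩ (h.sp 2 3 4 (by decide) (by decide))
  · rfl

end VoterFacts

end Voter

/-- With five candidates `A < B < C < D < E` and Bloc voting with
`k = 2`, if the winning set is `{B, C}` then it is Gehrlein-stable. -/
theorem five_candidates_BC_gehrlein_stable {N : ℕ}
    (P : Fin N → Fin 5 → Fin 5 → Prop) [∀ v a b, Decidable (P v a b)]
    (hP : StrictPrefs P) (hSP : SinglePeaked P) (hN : Odd N)
    (hW : IsWinningSet P 2 ({1, 2} : Finset (Fin 5))) :
    ∀ w ∈ ({1, 2} : Finset (Fin 5)), ∀ c ∉ ({1, 2} : Finset (Fin 5)),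
      Defeats P w c := by
  intro w hw c hc
  have facts : ∀ v : Fin N, VoterFacts (P v) := by
    intro v
    haveI := hP v
    refine ⟨fun a b c => trans_of (P v), fun a => irrefl_of (P v) a, ?_, 
      fun i j k hij hjk => hSP v i j k hij hjk⟩
    intro a b hab
    rcases trichotomous_of (P v) a b with h | h | h
    · exact Or.inl h
    · exact absurd h hab
    · exact Or.inr h
  have s0 : blocScore P 2 0 < blocScore P 2 2 := hW.2 2 (by decide) 0 (by decide)
  have s3 : blocScore P 2 3 < blocScore P 2 1 := hW.2 1 (by decide) 3 (by decide)
  have s4 : blocScore P 2 4 < blocScore P 2 1 := hW.2 1 (by decide) 4 (by decide)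
  simp only [Finset.mem_insert, Finset.mem_singleton] at hw
  rcases hw with rfl | rfl <;> fin_cases c
  · -- w = 1, c = 0
    exact defeats_of P hP 1 0 0 2 (by decide)
      (fun v h => approves_of_unique_beater P v 0 ((facts v).case01 h)) s0
      (fun v => not_coapprove P hP hSP v 0 1 2 (by decide) (by decide))
  · exact absurd (by decide) hc
  · exact absurd (by decide) hc
  · -- w = 1, c = 3
    exact defeats_of P hP 1 3 3 1 (by decide)
      (fun v h => approves_of_unique_beater P v 3 ((facts v).case31 h)) s3
      (fun v hh => not_coapprove P hP hSP v 1 2 3 (by decide) (by decide) ⟨hh.2, hh.1⟩)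
  · -- w = 1, c = 4
    exact defeats_of P hP 1 4 3 1 (by decide)
      (fun v h => approves_of_unique_beater P v 3 ((facts v).case41 h)) s3
      (fun v hh => not_coapprove P hP hSP v 1 2 3 (by decide) (by decide) ⟨hh.2, hh.1⟩)
  · -- w = 2, c = 0
    exact defeats_of P hP 2 0 0 2 (by decide)
      (fun v h => approves_of_unique_beater P v 0 ((facts v).case02 h)) s0
      (fun v => not_coapprove P hP hSP v 0 1 2 (by decide) (by decide))
  · exact absurd (by decide) hc
  · exact absurd (by decide) hc
  · -- w = 2, c = 3
    exact defeats_of P hP 2 3 3 1 (by decide)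
      (fun v h => approves_of_unique_beater P v 3 ((facts v).case32 h)) s3
      (fun v hh => not_coapprove P hP hSP v 1 2 3 (by decide) (by decide) ⟨hh.2, hh.1⟩)
  · -- w = 2, c = 4
    exact defeats_of P hP 2 4 4 1 (by decide)
      (fun v h => approves_of_unique_beater P v 4 ((facts v).case42 h)) s4
      (fun v hh => not_coapprove P hP hSP v 1 2 4 (by decide) (by decide) ⟨hh.2, hh.1⟩)
end

section
/- With five candidates A < B < C < D < E, single-peaked preferences, an odd number N of voters, and Bloc voting with k = 3: any winning set of the form {A,B,C}, {B,C,D}, or {C,D,E} (each winner having strictly more approvals than each non-winner) is Gehrlein-stable. -/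
open Finset

set_option linter.unusedSectionVars false

section Aux

variable {N : ℕ} (P : Fin N → Fin 5 → Fin 5 → Prop) [∀ v a b, Decidable (P v a b)]

/-- rank of candidate `a` for voter `v` -/
def rk (v : Fin N) (a : Fin 5) : ℕ := (univ.filter fun b => P v b a).card

variable {P}

lemma approves_iff (v : Fin N) (a : Fin 5) : Approves P 3 v a ↔ rk P v a < 3 := Iff.rfl

lemma rk_lt (hP : StrictPrefs P) {v : Fin N} {a b : Fin 5} (h : P v a b) :
    rk P v a < rk P v b := by
  haveI := hP v
  have hsub : insert a (univ.filter fun x => P v x a) ⊆ univ.filter fun x => P v x b := by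
    intro x hx
    rcases mem_insert.1 hx with rfl | hx
    · exact mem_filter.2 ⟨mem_univ _, h⟩
    · exact mem_filter.2 ⟨mem_univ _, trans_of (P v) (mem_filter.1 hx).2 h⟩
  have hna : a ∉ univ.filter fun x => P v x a := by
    simp [irrefl_of (P v) a]
  have hc := card_le_card hsub
  rw [card_insert_of_notMem hna] at hc
  simp only [rk]
  omega

lemma rk_ne (hP : StrictPrefs P) {v : Fin N} {a b : Fin 5} (h : a ≠ b) :
    rk P v a ≠ rk P v b := by
  haveI := hP v
  rcases trichotomous_of (P v) a b with h' | rfl | h'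
  · exact (rk_lt hP h').ne
  · exact absurd rfl h
  · exact (rk_lt hP h').ne'

lemma rk_le (hP : StrictPrefs P) (v : Fin N) (a : Fin 5) : rk P v a ≤ 4 := by
  haveI := hP v
  have hsub : (univ.filter fun b => P v b a) ⊆ univ.erase a := by
    intro x hx
    refine mem_erase.2 ⟨?_, mem_univ _⟩
    rintro rfl
    exact irrefl_of (P v) _ (mem_filter.1 hx).2
  have := card_le_card hsub
  rwa [card_erase_of_mem (mem_univ _), card_univ, Fintype.card_fin] at this

lemma pref_of_app (hP : StrictPrefs P) {v : Fin N} {a b : Fin 5}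
    (ha : Approves P 3 v a) (hb : ¬ Approves P 3 v b) : P v a b := by
  haveI := hP v
  rcases trichotomous_of (P v) a b with h' | rfl | h'
  · exact h'
  · exact absurd ha hb
  · have := rk_lt hP h'
    rw [approves_iff] at ha hb
    omega

lemma pref_flip (hP : StrictPrefs P) {v : Fin N} {a b : Fin 5} (hne : a ≠ b)
    (h : ¬ P v b a) : P v a b := by
  haveI := hP v
  rcases trichotomous_of (P v) a b with h' | rfl | h'
  · exact h'
  · exact absurd rfl hne
  · exact absurd h' h

lemma app_two (hP : StrictPrefs P) (hSP : SinglePeaked P) (v : Fin N) :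
    Approves P 3 v 2 := by
  haveI := hP v
  rw [approves_iff]
  by_cases h : P v 0 2 ∨ P v 1 2
  · have h3 : ¬ P v 3 2 := by
      rcases h with h | h
      · exact fun hc => hSP v 0 2 3 (by decide) (by decide) ⟨h, hc⟩
      · exact fun hc => hSP v 1 2 3 (by decide) (by decide) ⟨h, hc⟩
    have h4 : ¬ P v 4 2 := by
      rcases h with h | h
      · exact fun hc => hSP v 0 2 4 (by decide) (by decide) ⟨h, hc⟩
      · exact fun hc => hSP v 1 2 4 (by decide) (by decide) ⟨h, hc⟩
    have hsub : (univ.filter fun b => P v b 2) ⊆ ({0, 1} : Finset (Fin 5)) := by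
      intro x hx
      have hx' := (mem_filter.1 hx).2
      fin_cases x
      · simp
      · simp
      · exact absurd hx' (irrefl_of (P v) 2)
      · exact absurd hx' h3
      · exact absurd hx' h4
    have := card_le_card hsub
    simp only [rk]
    have h2 : ({0, 1} : Finset (Fin 5)).card ≤ 2 := by decide
    omega
  · push_neg at h
    have hsub : (univ.filter fun b => P v b 2) ⊆ ({3, 4} : Finset (Fin 5)) := by
      intro x hx
      have hx' := (mem_filter.1 hx).2
      fin_cases x
      · exact absurd hx' h.1
      · exact absurd hx' h.2
      · exact absurd hx' (irrefl_of (P v) 2)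
      · simp
      · simp
    have := card_le_card hsub
    simp only [rk]
    have h2 : ({3, 4} : Finset (Fin 5)).card ≤ 2 := by decide
    omega

lemma classify (hP : StrictPrefs P) (hSP : SinglePeaked P) (v : Fin N) :
    (Approves P 3 v 0 ∧ Approves P 3 v 1 ∧ Approves P 3 v 2 ∧
      ¬Approves P 3 v 3 ∧ ¬Approves P 3 v 4) ∨
    (¬Approves P 3 v 0 ∧ Approves P 3 v 1 ∧ Approves P 3 v 2 ∧
      Approves P 3 v 3 ∧ ¬Approves P 3 v 4) ∨
    (¬Approves P 3 v 0 ∧ ¬Approves P 3 v 1 ∧ Approves P 3 v 2 ∧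
      Approves P 3 v 3 ∧ Approves P 3 v 4) := by
  have h2 := app_two hP hSP v
  have app01 : Approves P 3 v 0 → Approves P 3 v 1 := by
    intro h0
    by_contra h1
    exact hSP v 0 1 2 (by decide) (by decide)
      ⟨pref_of_app hP h0 h1, pref_of_app hP h2 h1⟩
  have app43 : Approves P 3 v 4 → Approves P 3 v 3 := by
    intro h4
    by_contra h3
    exact hSP v 2 3 4 (by decide) (by decide)
      ⟨pref_of_app hP h2 h3, pref_of_app hP h4 h3⟩
  have e01 := rk_ne hP (v := v) (show (0 : Fin 5) ≠ 1 by decide)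
  have e02 := rk_ne hP (v := v) (show (0 : Fin 5) ≠ 2 by decide)
  have e03 := rk_ne hP (v := v) (show (0 : Fin 5) ≠ 3 by decide)
  have e04 := rk_ne hP (v := v) (show (0 : Fin 5) ≠ 4 by decide)
  have e12 := rk_ne hP (v := v) (show (1 : Fin 5) ≠ 2 by decide)
  have e13 := rk_ne hP (v := v) (show (1 : Fin 5) ≠ 3 by decide)
  have e14 := rk_ne hP (v := v) (show (1 : Fin 5) ≠ 4 by decide)
  have e23 := rk_ne hP (v := v) (show (2 : Fin 5) ≠ 3 by decide)
  have e24 := rk_ne hP (v := v) (show (2 : Fin 5) ≠ 4 by decide)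
  have e34 := rk_ne hP (v := v) (show (3 : Fin 5) ≠ 4 by decide)
  have l0 := rk_le hP v 0
  have l1 := rk_le hP v 1
  have l3 := rk_le hP v 3
  have l4 := rk_le hP v 4
  by_cases h0 : Approves P 3 v 0 <;> by_cases h4 : Approves P 3 v 4
  · exfalso
    have h1 := app01 h0
    have h3 := app43 h4
    rw [approves_iff] at h0 h1 h2 h3 h4
    omega
  · left
    refine ⟨h0, app01 h0, h2, ?_, h4⟩
    intro h3
    have h1 := app01 h0
    rw [approves_iff] at h0 h1 h2 h3
    omega
  · right; right
    refine ⟨h0, ?_, h2, app43 h4, h4⟩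
    intro h1
    have h3 := app43 h4
    rw [approves_iff] at h1 h2 h3 h4
    omega
  · right; left
    have h1 : Approves P 3 v 1 := by
      rw [approves_iff] at h0 h4 ⊢
      omega
    have h3 : Approves P 3 v 3 := by
      rw [approves_iff] at h0 h4 ⊢
      omega
    exact ⟨h0, h1, h2, h3, h4⟩

end Aux

/-- With five candidates and Bloc voting with `k = 3`, any winning set
of the form `{A,B,C}`, `{B,C,D}` or `{C,D,E}` is Gehrlein-stable. -/
theorem five_candidates_three_winners_gehrlein_stable {N : ℕ}
    (P : Fin N → Fin 5 → Fin 5 → Prop) [∀ v a b, Decidable (P v a b)]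
    (hP : StrictPrefs P) (hSP : SinglePeaked P) (hN : Odd N)
    (W : Finset (Fin 5))
    (hform : W = {0, 1, 2} ∨ W = {1, 2, 3} ∨ W = {2, 3, 4})
    (hW : IsWinningSet P 3 W) :
    ∀ w ∈ W, ∀ c ∉ W, Defeats P w c := by
  classical
  set X := univ.filter (fun v => Approves P 3 v 0) with hXdef
  set Z := univ.filter (fun v => Approves P 3 v 4) with hZdef
  set Y := univ.filter (fun v => ¬Approves P 3 v 0 ∧ ¬Approves P 3 v 4) with hYdef
  have hcl := classify hP hSP
  have hXZ : Disjoint X Z := by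
    rw [disjoint_left]
    intro v hv1 hv2
    rw [hXdef, mem_filter] at hv1
    rw [hZdef, mem_filter] at hv2
    rcases hcl v with ⟨_, _, _, _, h⟩ | ⟨h, _⟩ | ⟨h, _⟩ <;> tauto
  have hXY : Disjoint X Y := by
    rw [disjoint_left]
    intro v hv1 hv2
    rw [hXdef, mem_filter] at hv1
    rw [hYdef, mem_filter] at hv2
    tauto
  have hYZ : Disjoint Y Z := by
    rw [disjoint_left]
    intro v hv1 hv2
    rw [hYdef, mem_filter] at hv1
    rw [hZdef, mem_filter] at hv2
    tauto
  have hsum : X.card + Y.card + Z.card = N := by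
    have hY' : Y = univ \ (X ∪ Z) := by
      ext v
      rw [hYdef, hXdef, hZdef]
      simp only [mem_filter, mem_sdiff, mem_union, mem_univ, true_and]
      tauto
    have hb := card_le_card (subset_univ (X ∪ Z))
    rw [card_union_of_disjoint hXZ, card_univ, Fintype.card_fin] at hb
    rw [hY', card_sdiff_of_subset (subset_univ _), card_union_of_disjoint hXZ, card_univ,
      Fintype.card_fin]
    omega
  have hs0 : blocScore P 3 0 = X.card := rfl
  have hs4 : blocScore P 3 4 = Z.card := rfl
  have hs1 : blocScore P 3 1 = X.card + Y.card := by
    have he : univ.filter (fun v => Approves P 3 v 1) = X ∪ Y := by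
      ext v
      rw [hXdef, hYdef]
      simp only [mem_filter, mem_union, mem_univ, true_and]
      rcases hcl v with h | h | h <;> tauto
    rw [blocScore, he, card_union_of_disjoint hXY]
  have hs3 : blocScore P 3 3 = Y.card + Z.card := by
    have he : univ.filter (fun v => Approves P 3 v 3) = Y ∪ Z := by
      ext v
      rw [hYdef, hZdef]
      simp only [mem_filter, mem_union, mem_univ, true_and]
      rcases hcl v with h | h | h <;> tauto
    rw [blocScore, he, card_union_of_disjoint hYZ]
  have hkey : ∀ (S : Finset (Fin N)) (w c : Fin 5), 2 * S.card > N →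
      (∀ v ∈ S, P v w c) → Defeats P w c := by
    intro S w c hcard h
    have hsub : S ⊆ univ.filter fun v => P v w c :=
      fun v hv => mem_filter.2 ⟨mem_univ _, h v hv⟩
    have := card_le_card hsub
    unfold Defeats prefCount
    omega
  -- membership extractors
  have hmemX : ∀ v ∈ X, Approves P 3 v 0 ∧ Approves P 3 v 1 ∧ Approves P 3 v 2 ∧
      ¬Approves P 3 v 3 ∧ ¬Approves P 3 v 4 := by
    intro v hv
    rw [hXdef, mem_filter] at hv
    rcases hcl v with h | h | h
    · exact h
    · exact absurd hv.2 h.1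
    · exact absurd hv.2 h.1
  have hmemY : ∀ v ∈ Y, ¬Approves P 3 v 0 ∧ Approves P 3 v 1 ∧ Approves P 3 v 2 ∧
      Approves P 3 v 3 ∧ ¬Approves P 3 v 4 := by
    intro v hv
    rw [hYdef, mem_filter] at hv
    rcases hcl v with h | h | h
    · exact absurd h.1 hv.2.1
    · exact h
    · exact absurd h.2.2.2.2 hv.2.2
  have hmemZ : ∀ v ∈ Z, ¬Approves P 3 v 0 ∧ ¬Approves P 3 v 1 ∧ Approves P 3 v 2 ∧
      Approves P 3 v 3 ∧ Approves P 3 v 4 := by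
    intro v hv
    rw [hZdef, mem_filter] at hv
    rcases hcl v with h | h | h
    · exact absurd hv.2 h.2.2.2.2
    · exact absurd hv.2 h.2.2.2.2
    · exact h
  -- extra single-peaked preference facts
  have hZ10 : ∀ v ∈ Z, P v 1 0 := by
    intro v hv
    obtain ⟨c0, c1, c2, _, _⟩ := hmemZ v hv
    have h21 : P v 2 1 := pref_of_app hP c2 c1
    have hno : ¬ P v 0 1 := fun h => hSP v 0 1 2 (by decide) (by decide) ⟨h, h21⟩
    exact pref_flip hP (by decide) hno
  have hX34 : ∀ v ∈ X, P v 3 4 := by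
    intro v hv
    obtain ⟨_, _, a2, a3, _⟩ := hmemX v hv
    have h23 : P v 2 3 := pref_of_app hP a2 a3
    have hno : ¬ P v 4 3 := fun h => hSP v 2 3 4 (by decide) (by decide) ⟨h23, h⟩
    exact pref_flip hP (by decide) hno
  rcases hform with rfl | rfl | rfl
  · -- W = {0,1,2}
    have hI : blocScore P 3 0 > blocScore P 3 3 :=
      hW.2 0 (by decide) 3 (by decide)
    rw [hs0, hs3] at hI
    have hmaj : 2 * X.card > N := by omega
    intro w hw c hc
    fin_cases hw <;> fin_cases c <;> first
      | (exact absurd (by decide) hc)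
      | (refine hkey X _ _ hmaj fun v hv => ?_
         obtain ⟨a0, a1, a2, a3, a4⟩ := hmemX v hv
         first
           | exact pref_of_app hP a0 a3
           | exact pref_of_app hP a0 a4
           | exact pref_of_app hP a1 a3
           | exact pref_of_app hP a1 a4
           | exact pref_of_app hP a2 a3
           | exact pref_of_app hP a2 a4)
  · -- W = {1,2,3}
    have hI0 : blocScore P 3 3 > blocScore P 3 0 :=
      hW.2 3 (by decide) 0 (by decide)
    have hI4 : blocScore P 3 1 > blocScore P 3 4 :=
      hW.2 1 (by decide) 4 (by decide)
    rw [hs3, hs0] at hI0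
    rw [hs1, hs4] at hI4
    have hmaj0 : 2 * (Y ∪ Z).card > N := by
      rw [card_union_of_disjoint hYZ]; omega
    have hmaj4 : 2 * (X ∪ Y).card > N := by
      rw [card_union_of_disjoint hXY]; omega
    intro w hw c hc
    fin_cases hw <;> fin_cases c <;> first
      | (exact absurd (by decide) hc)
      | (refine hkey (Y ∪ Z) _ _ hmaj0 fun v hv => ?_
         rcases mem_union.1 hv with hv | hv
         · obtain ⟨b0, b1, b2, b3, b4⟩ := hmemY v hv
           first
             | exact pref_of_app hP b1 b0
             | exact pref_of_app hP b2 b0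
             | exact pref_of_app hP b3 b0
         · obtain ⟨c0, c1, c2, c3, c4⟩ := hmemZ v hv
           first
             | exact hZ10 v hv
             | exact pref_of_app hP c2 c0
             | exact pref_of_app hP c3 c0)
      | (refine hkey (X ∪ Y) _ _ hmaj4 fun v hv => ?_
         rcases mem_union.1 hv with hv | hv
         · obtain ⟨a0, a1, a2, a3, a4⟩ := hmemX v hv
           first
             | exact pref_of_app hP a1 a4
             | exact pref_of_app hP a2 a4
             | exact hX34 v hv
         · obtain ⟨b0, b1, b2, b3, b4⟩ := hmemY v hv
           first
             | exact pref_of_app hP b1 b4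
             | exact pref_of_app hP b2 b4
             | exact pref_of_app hP b3 b4)
  · -- W = {2,3,4}
    have hI : blocScore P 3 4 > blocScore P 3 1 :=
      hW.2 4 (by decide) 1 (by decide)
    rw [hs4, hs1] at hI
    have hmaj : 2 * Z.card > N := by omega
    intro w hw c hc
    fin_cases hw <;> fin_cases c <;> first
      | (exact absurd (by decide) hc)
      | (refine hkey Z _ _ hmaj fun v hv => ?_
         obtain ⟨c0, c1, c2, c3, c4⟩ := hmemZ v hv
         first
           | exact pref_of_app hP c2 c0
           | exact pref_of_app hP c2 c1
           | exact pref_of_app hP c3 c0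
           | exact pref_of_app hP c3 c1
           | exact pref_of_app hP c4 c0
           | exact pref_of_app hP c4 c1)
end
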